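/- Let x be an n-tuple with entries in S and let S_x = {x_1,…,x_n} be the set of its values. Suppose distributions G and G' on S agree pointwise and cumulatively on S_x. Let Y = (Y_1,…,Y_n) be n i.i.d. draws from the respective distribution, with order statistics Y_(1) ≤ … ≤ Y_(n), and let x_(1) ≤ … ≤ x_(n) be the order statistics of x. Then for every i ∈ {1,…,n}: (a) P_G[Y_(j) = x_(j) for all j ≤ i] = P_{G'}[Y_(j) = x_(j) for all j ≤ i], and (b) P_G[x_(i) < Y_(i) and Y_(j) = x_(j) for all j < i] = P_{G'}[x_(i) < Y_(i) and Y_(j) = x_(j) for all j < i]. -/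

import Mathlib

noncomputable section

/-- Distributions on the finite support `S`. -/
def distSet (S : Finset ℝ) : Set (EuclideanSpace ℝ ↥S) :=
  {F | (∀ s, 0 ≤ F s) ∧ ∑ s, F s = 1}

open Classical in
/-- `P_F[A]`: probability of a set `A` of `n`-tuples under `n` i.i.d. draws from `F`. -/
def probOf (S : Finset ℝ) (n : ℕ) (F : EuclideanSpace ℝ ↥S)
    (A : Set (Fin n → ↥S)) : ℝ :=
  ∑ y : Fin n → ↥S, if y ∈ A then ∏ i, F (y i) else 0

/-- The sorted version of a tuple (its tuple of order statistics). -/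
def sortTup (S : Finset ℝ) (n : ℕ) (y : Fin n → ↥S) : Fin n → ↥S :=
  y ∘ Tuple.sort y

/-- `G` and `H` agree pointwise on `C`. -/
def ptAgree {S : Finset ℝ} (C : Set ↥S) (G H : EuclideanSpace ℝ ↥S) : Prop :=
  ∀ c ∈ C, G c = H c

open Classical in
/-- `G` and `H` agree cumulatively on `C`. -/
def cumAgree (S : Finset ℝ) (C : Set ↥S) (G H : EuclideanSpace ℝ ↥S) : Prop :=
  ∀ c ∈ C, (∑ s : ↥S, if s ≤ c then G s else 0) = ∑ s : ↥S, if s ≤ c then H s else 0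

namespace Stmt19Aux

open Classical Finset

variable {S : Finset ℝ} {n : ℕ}

/-- number of coordinates `≤ t` -/
def cnt (y : Fin n → ↥S) (t : ↥S) : ℕ := (univ.filter (fun k => y k ≤ t)).card

lemma mem_iff_lt_card {F : Finset (Fin n)} (hF : ∀ a b : Fin n, a ≤ b → b ∈ F → a ∈ F)
    (j : Fin n) : j ∈ F ↔ (j : ℕ) < F.card := by
  constructor
  · intro hj
    have h : Finset.Iic j ⊆ F := fun a ha => hF a j (Finset.mem_Iic.mp ha) hj
    have := Finset.card_le_card h
    rw [Fin.card_Iic] at this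
    omega
  · intro hj
    by_contra hjF
    have h : F ⊆ Finset.Iio j := by
      intro a ha
      rw [Finset.mem_Iio]
      by_contra hle
      exact hjF (hF j a (le_of_not_gt hle) ha)
    have := Finset.card_le_card h
    rw [Fin.card_Iio] at this
    omega

lemma cnt_sort (y : Fin n → ↥S) (t : ↥S) :
    (univ.filter (fun k => sortTup S n y k ≤ t)).card = cnt y t := by
  unfold cnt
  apply Finset.card_bij (fun k _ => Tuple.sort y k)
  · intro a ha
    simp only [mem_filter, mem_univ, true_and, sortTup, Function.comp] at *
    exact (Finset.mem_filter.mp ha).2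
  · intro a _ b _ h
    exact (Tuple.sort y).injective h
  · intro b hb
    refine ⟨(Tuple.sort y).symm b, ?_, by simp⟩
    simp only [mem_filter, mem_univ, true_and, sortTup, Function.comp,
      Equiv.apply_symm_apply] at *
    exact Finset.mem_filter.mpr ⟨mem_univ _, by simpa using hb⟩

lemma sort_le_iff (y : Fin n → ↥S) (j : Fin n) (t : ↥S) :
    sortTup S n y j ≤ t ↔ (j : ℕ) < cnt y t := by
  rw [← cnt_sort y t]
  have hmono : Monotone (sortTup S n y) := Tuple.monotone_sort y
  have h := mem_iff_lt_card (F := univ.filter (fun k => sortTup S n y k ≤ t))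
    (fun a b hab hb => by
      simp only [mem_filter, mem_univ, true_and] at *
      exact le_trans (hmono hab) hb) j
  simpa using h

lemma cnt_congr {y y' : Fin n → ↥S} {c : ↥S}
    (h : ∀ k, (y k ≤ c → y' k = y k) ∧ (¬ y k ≤ c → ¬ y' k ≤ c))
    {t : ↥S} (ht : t ≤ c) : cnt y' t = cnt y t := by
  unfold cnt
  apply Finset.card_nbij id (fun a ha => ?_) (fun a _ b _ hab => hab) (fun b hb => ?_)
  · simp only [mem_coe, mem_filter, mem_univ, true_and, id] at *
    by_cases hk : y a ≤ c
    · rwa [(h a).1 hk] at ha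
    · exact absurd (le_trans ha ht) ((h a).2 hk)
  · refine ⟨b, ?_, rfl⟩
    simp only [mem_coe, mem_filter, mem_univ, true_and] at *
    by_cases hk : y b ≤ c
    · rwa [(h b).1 hk]
    · exact absurd (le_trans hb ht) hk

/-- pointwise classification relative to the cutoff `c` -/
def sigma1 (c : ↥S) (s : ↥S) : Option ↥S := if s ≤ c then some s else none

/-- collapsed weight of a class -/
def W (c : ↥S) (F : EuclideanSpace ℝ ↥S) : Option ↥S → ℝ
  | none => ∑ s : ↥S, if c < s then F s else 0
  | some s => if s ≤ c then F s else 0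

lemma prob_congr (S : Finset ℝ) (hS : S.Nonempty) (n : ℕ)
    (G G' : EuclideanSpace ℝ ↥S) (c : ↥S) (A : Set (Fin n → ↥S))
    (hsat : ∀ y y' : Fin n → ↥S,
      (∀ k, (y k ≤ c → y' k = y k) ∧ (¬ y k ≤ c → ¬ y' k ≤ c)) → y ∈ A → y' ∈ A)
    (hval : ∀ y ∈ A, ∀ k, y k ≤ c → G (y k) = G' (y k))
    (htail : (∑ s : ↥S, if c < s then G s else 0) = ∑ s : ↥S, if c < s then G' s else 0) :
    probOf S n G A = probOf S n G' A := by
  classical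
  have hd0 : ∃ s : ↥S, True := ⟨⟨hS.choose, hS.choose_spec⟩, trivial⟩
  set d : ↥S := if h : ∃ s : ↥S, ¬ s ≤ c then h.choose else hd0.choose with hd
  have hd' : (∃ s : ↥S, ¬ s ≤ c) → ¬ d ≤ c := by
    intro h
    rw [hd, dif_pos h]
    exact h.choose_spec
  set lift : (Fin n → Option ↥S) → (Fin n → ↥S) := fun z k => (z k).getD d with hlift
  set Abar : (Fin n → Option ↥S) → Prop :=
    fun z => lift z ∈ A ∧ ∀ k s, z k = some s → s ≤ c with hAbar
  have hrel : ∀ y : Fin n → ↥S, ∀ k,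
      (y k ≤ c → lift (fun k => sigma1 c (y k)) k = y k) ∧
      (¬ y k ≤ c → ¬ lift (fun k => sigma1 c (y k)) k ≤ c) := by
    intro y k
    constructor
    · intro h
      simp [hlift, sigma1, h]
    · intro h
      simp only [hlift, sigma1, if_neg h, Option.getD_none]
      exact hd' ⟨y k, h⟩
  have hrel' : ∀ y : Fin n → ↥S, ∀ k,
      (lift (fun k => sigma1 c (y k)) k ≤ c → y k = lift (fun k => sigma1 c (y k)) k) ∧
      (¬ lift (fun k => sigma1 c (y k)) k ≤ c → ¬ y k ≤ c) := by
    intro y k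
    by_cases h : y k ≤ c
    · have he := (hrel y k).1 h
      rw [he]
      exact ⟨fun _ => rfl, fun hc => absurd h hc⟩
    · have he := (hrel y k).2 h
      exact ⟨fun hc => absurd hc he, fun _ => h⟩
  have hmem : ∀ y : Fin n → ↥S, y ∈ A ↔ Abar (fun k => sigma1 c (y k)) := by
    intro y
    constructor
    · intro hy
      refine ⟨hsat y _ (hrel y) hy, ?_⟩
      intro k s hs
      simp only [sigma1] at hs
      by_cases h : y k ≤ c
      · rw [if_pos h] at hs
        cases hs
        exact h
      · rw [if_neg h] at hs
        cases hs
    · intro hy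
      exact hsat _ y (hrel' y) hy.1
  have Wval : ∀ (F : EuclideanSpace ℝ ↥S) (o : Option ↥S),
      (∑ s : ↥S, if sigma1 c s = o then F s else 0) = W c F o := by
    intro F o
    cases o with
    | none =>
      show _ = ∑ s : ↥S, if c < s then F s else 0
      apply Finset.sum_congr rfl
      intro s _
      by_cases h : s ≤ c
      · simp [sigma1, h, not_lt.mpr h]
      · simp [sigma1, h, not_le.mp h]
    | some s₀ =>
      show _ = if s₀ ≤ c then F s₀ else 0
      have : ∀ s : ↥S, (if sigma1 c s = some s₀ then F s else 0)
          = if s = s₀ then (if s₀ ≤ c then F s₀ else 0) else 0 := by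
        intro s
        by_cases hs : s = s₀
        · subst hs
          by_cases h : s ≤ c
          · simp [sigma1, h]
          · simp [sigma1, h]
        · have : sigma1 c s ≠ some s₀ := by
            simp only [sigma1]
            by_cases h : s ≤ c
            · simp [h, hs]
            · simp [h]
          simp [this, hs]
      rw [Finset.sum_congr rfl (fun s _ => this s)]
      simp
  have key : ∀ F : EuclideanSpace ℝ ↥S, probOf S n F A =
      ∑ z : Fin n → Option ↥S, if Abar z then ∏ k, W c F (z k) else 0 := by
    intro F
    show (∑ y : Fin n → ↥S, if y ∈ A then ∏ k, F (y k) else 0) = _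
    calc (∑ y : Fin n → ↥S, if y ∈ A then ∏ k, F (y k) else 0)
        = ∑ y : Fin n → ↥S,
            if Abar (fun k => sigma1 c (y k)) then ∏ k, F (y k) else 0 := by
          refine Finset.sum_congr rfl fun y _ => ?_
          by_cases h : y ∈ A
          · rw [if_pos h, if_pos ((hmem y).mp h)]
          · rw [if_neg h, if_neg (fun hc => h ((hmem y).mpr hc))]
      _ = ∑ z : Fin n → Option ↥S, ∑ y ∈ univ.filter
            (fun y : Fin n → ↥S => (fun k => sigma1 c (y k)) = z),
            (if Abar (fun k => sigma1 c (y k)) then ∏ k, F (y k) else 0) :=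
          (Finset.sum_fiberwise _ _ _).symm
      _ = ∑ z : Fin n → Option ↥S, if Abar z then (∑ y ∈ univ.filter
            (fun y : Fin n → ↥S => (fun k => sigma1 c (y k)) = z),
            ∏ k, F (y k)) else 0 := by
          refine Finset.sum_congr rfl fun z _ => ?_
          by_cases hz : Abar z
          · rw [if_pos hz, Finset.sum_congr rfl]
            intro y hy
            rw [mem_filter] at hy
            rw [hy.2, if_pos hz]
          · rw [if_neg hz]
            apply Finset.sum_eq_zero
            intro y hy
            rw [mem_filter] at hy
            rw [hy.2, if_neg hz]
      _ = ∑ z : Fin n → Option ↥S, if Abar z then ∏ k, W c F (z k) else 0 := by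
          refine Finset.sum_congr rfl fun z _ => ?_
          congr 1
          have : (∏ k, W c F (z k))
              = ∏ k, ∑ s : ↥S, if sigma1 c s = z k then F s else 0 := by
            exact Finset.prod_congr rfl fun k _ => (Wval F (z k)).symm
          rw [this, Fintype.prod_sum, Finset.sum_filter]
          refine Finset.sum_congr rfl fun y _ => ?_
          by_cases h : (fun k => sigma1 c (y k)) = z
          · rw [if_pos h]
            refine Finset.prod_congr rfl fun k _ => ?_
            rw [if_pos (congrFun h k)]
          · rw [if_neg h]
            have : ∃ k, sigma1 c (y k) ≠ z k := by
              by_contra hc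
              push_neg at hc
              exact h (funext hc)
            obtain ⟨k, hk⟩ := this
            exact (Finset.prod_eq_zero (mem_univ k) (by rw [if_neg hk])).symm
  rw [key G, key G']
  refine Finset.sum_congr rfl fun z _ => ?_
  by_cases hz : Abar z
  · rw [if_pos hz, if_pos hz]
    refine Finset.prod_congr rfl fun k _ => ?_
    cases hzk : z k with
    | none => exact htail
    | some s =>
      have hsc : s ≤ c := hz.2 k s hzk
      show (if s ≤ c then G s else 0) = (if s ≤ c then G' s else 0)
      rw [if_pos hsc, if_pos hsc]
      have hls : lift z k = s := by rw [hlift]; simp [hzk]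
      have := hval (lift z) hz.1 k (by rw [hls]; exact hsc)
      rwa [hls] at this
  · rw [if_neg hz, if_neg hz]

end Stmt19Aux

open Stmt19Aux in
/-- if `G` and `G'` agree pointwise and cumulatively on the set
`S_x` of values of `x`, then for every `i`: (a) the probability that the first
`i` order statistics of an i.i.d. sample match those of `x` is the same under
`G` and `G'`, and (b) likewise for the event that the order statistics below
`i` match and the `i`-th strictly exceeds `x_(i)`. -/
theorem stmt19 (S : Finset ℝ) (hS : S.Nonempty) (n : ℕ) (hn : 1 ≤ n)
    (x : Fin n → ↥S)
    (G G' : EuclideanSpace ℝ ↥S) (hG : G ∈ distSet S) (hG' : G' ∈ distSet S)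
    (hpt : ptAgree (Set.range x) G G') (hcum : cumAgree S (Set.range x) G G')
    (i : Fin n) :
    probOf S n G {y | ∀ j ≤ i, sortTup S n y j = sortTup S n x j} =
        probOf S n G' {y | ∀ j ≤ i, sortTup S n y j = sortTup S n x j} ∧
      probOf S n G {y | sortTup S n x i < sortTup S n y i ∧
          ∀ j < i, sortTup S n y j = sortTup S n x j} =
        probOf S n G' {y | sortTup S n x i < sortTup S n y i ∧
          ∀ j < i, sortTup S n y j = sortTup S n x j} := by
  classical
  set c : ↥S := sortTup S n x i with hc
  have hcr : c ∈ Set.range x := ⟨Tuple.sort x i, rfl⟩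
  have hmono_x : Monotone (sortTup S n x) := Tuple.monotone_sort x
  -- tail sums agree
  have hsum : ∀ F : EuclideanSpace ℝ ↥S, F ∈ distSet S →
      (∑ s : ↥S, if c < s then F s else 0) = 1 - ∑ s : ↥S, if s ≤ c then F s else 0 := by
    intro F hF
    have h1 : ∑ s : ↥S, F s = 1 := hF.2
    have h2 : ∀ s : ↥S, F s = (if s ≤ c then F s else 0) + (if c < s then F s else 0) := by
      intro s
      by_cases h : s ≤ c
      · simp [h, not_lt.mpr h]
      · simp [h, not_le.mp h]
    rw [Finset.sum_congr rfl (fun s _ => h2 s), Finset.sum_add_distrib] at h1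
    linarith
  have htail : (∑ s : ↥S, if c < s then G s else 0)
      = ∑ s : ↥S, if c < s then G' s else 0 := by
    rw [hsum G hG, hsum G' hG']
    have := hcum c hcr
    rw [this]
  -- coordinates of a tuple are values of its sorted version
  have hcoord : ∀ (y : Fin n → ↥S) (k : Fin n),
      y k = sortTup S n y ((Tuple.sort y).symm k) := by
    intro y k
    show y k = y (Tuple.sort y ((Tuple.sort y).symm k))
    rw [Equiv.apply_symm_apply]
  constructor
  · -- event (a)
    apply prob_congr S hS n G G' c
    · -- saturation
      intro y y' hrel hy j hj
      have hxc : sortTup S n x j ≤ c := hmono_x hj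
      apply le_antisymm
      · rw [sort_le_iff, cnt_congr hrel hxc, ← sort_le_iff, hy j hj]
      · by_cases ht : sortTup S n y' j ≤ c
        · have h1 : (j : ℕ) < cnt y' (sortTup S n y' j) := (sort_le_iff _ _ _).mp le_rfl
          rw [cnt_congr hrel ht] at h1
          have h2 := (sort_le_iff y j _).mpr h1
          rwa [hy j hj] at h2
        · exact le_trans hxc (le_of_not_ge ht)
    · -- values
      intro y hy k hk
      have hm := hcoord y k
      set m := (Tuple.sort y).symm k with hmdef
      have hyrange : y k ∈ Set.range x := by
        by_cases hmi : m ≤ i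
        · exact ⟨Tuple.sort x m, (hm.trans (hy m hmi)).symm⟩
        · have h1 : sortTup S n y i ≤ sortTup S n y m :=
            Tuple.monotone_sort y (le_of_not_ge hmi)
          rw [hy i le_rfl, ← hm] at h1
          have h2 : y k = c := le_antisymm hk h1
          exact ⟨Tuple.sort x i, h2.symm⟩
      exact hpt _ hyrange
    · exact htail
  · -- event (b)
    apply prob_congr S hS n G G' c
    · -- saturation
      intro y y' hrel hy
      obtain ⟨hy1, hy2⟩ := hy
      constructor
      · rw [← not_le]
        intro hcon
        rw [sort_le_iff, cnt_congr hrel le_rfl, ← sort_le_iff] at hcon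
        exact absurd hy1 (not_lt.mpr hcon)
      · intro j hj
        have hxc : sortTup S n x j ≤ c := hmono_x (le_of_lt hj)
        apply le_antisymm
        · rw [sort_le_iff, cnt_congr hrel hxc, ← sort_le_iff, hy2 j hj]
        · by_cases ht : sortTup S n y' j ≤ c
          · have h1 : (j : ℕ) < cnt y' (sortTup S n y' j) := (sort_le_iff _ _ _).mp le_rfl
            rw [cnt_congr hrel ht] at h1
            have h2 := (sort_le_iff y j _).mpr h1
            rwa [hy2 j hj] at h2
          · exact le_trans hxc (le_of_not_ge ht)
    · -- values
      intro y hy k hk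
      obtain ⟨hy1, hy2⟩ := hy
      have hm := hcoord y k
      set m := (Tuple.sort y).symm k with hmdef
      have hyrange : y k ∈ Set.range x := by
        by_cases hmi : m < i
        · exact ⟨Tuple.sort x m, (hm.trans (hy2 m hmi)).symm⟩
        · have h1 : sortTup S n y i ≤ sortTup S n y m :=
            Tuple.monotone_sort y (le_of_not_gt hmi)
          rw [← hm] at h1
          exact absurd (lt_of_lt_of_le hy1 h1) (not_lt.mpr hk)
      exact hpt _ hyrange
    · exact htail

end
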